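/- Let K be a field, N ≥ 1 an integer, and z₁, …, z_N pairwise distinct elements of K. Then for every integer n with 1 ≤ n ≤ N, the sum ∑_{k=1}^{N} ( z_k^{N−n} · ∑_{j≠k} z_j ) / ∏_{j≠k} (z_k − z_j) equals −1 if n = 2, and equals 0 for all other n with 1 ≤ n ≤ N. -/

import Mathlib

open Polynomial Finset

section Aux
variable {K : Type*} [Field K] {N : ℕ}

lemma nodal_coeff (z : Fin N → K) (i : Fin N) :
    (Lagrange.basis Finset.univ z i).coeff (N - 1)
      = (∏ j ∈ Finset.univ.erase i, (z i - z j))⁻¹ := by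
  classical
  have hb : Lagrange.basis Finset.univ z i
      = C (∏ j ∈ Finset.univ.erase i, (z i - z j)⁻¹)
        * ∏ j ∈ Finset.univ.erase i, (X - C (z j)) := by
    rw [Lagrange.basis]
    simp_rw [Lagrange.basisDivisor]
    rw [Finset.prod_mul_distrib, map_prod]
  have hmon : (∏ j ∈ Finset.univ.erase i, (X - C (z j))).Monic :=
    monic_prod_of_monic _ _ fun j _ => monic_X_sub_C _
  have hdeg : (∏ j ∈ Finset.univ.erase i, (X - C (z j))).natDegree = N - 1 := by
    rw [natDegree_prod_of_monic _ _ fun j _ => monic_X_sub_C _]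
    simp [Finset.card_erase_of_mem]
  rw [hb, coeff_C_mul]
  rw [show N - 1 = (∏ j ∈ Finset.univ.erase i, (X - C (z j))).natDegree from hdeg.symm,
    hmon.coeff_natDegree, mul_one, ← Finset.prod_inv_distrib]

lemma interp_coeff (z : Fin N → K) (f : Fin N → K) :
    (Lagrange.interpolate Finset.univ z f).coeff (N - 1)
      = ∑ i, f i / ∏ j ∈ Finset.univ.erase i, (z i - z j) := by
  rw [Lagrange.interpolate_apply, finset_sum_coeff]
  refine Finset.sum_congr rfl fun i _ => ?_
  rw [coeff_C_mul, nodal_coeff, div_eq_mul_inv]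

/-- The key evaluation: `A m := ∑ i, z i ^ m / ∏_{j≠i}(z i - z j)`. -/
lemma A_le (hN : 1 ≤ N) (z : Fin N → K) (hz : Function.Injective z)
    {m : ℕ} (hm : m ≤ N - 1) :
    ∑ i, z i ^ m / ∏ j ∈ Finset.univ.erase i, (z i - z j)
      = if m = N - 1 then 1 else 0 := by
  have hinj : Set.InjOn z (Finset.univ : Finset (Fin N)) := hz.injOn
  have hdeg : (X ^ m : K[X]).degree < (Finset.univ : Finset (Fin N)).card := by
    rw [degree_X_pow, Finset.card_univ, Fintype.card_fin]
    exact_mod_cast Nat.lt_of_le_of_lt hm (Nat.sub_lt hN one_pos)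
  have h := Lagrange.eq_interpolate (f := (X ^ m : K[X])) hinj hdeg
  have := congrArg (fun p => p.coeff (N - 1)) h
  simp only [interp_coeff, eval_pow, eval_X] at this
  rw [← this]
  simp [coeff_X_pow, eq_comm]

lemma A_N (hN : 1 ≤ N) (z : Fin N → K) (hz : Function.Injective z) :
    ∑ i, z i ^ N / ∏ j ∈ Finset.univ.erase i, (z i - z j) = ∑ j, z j := by
  have hinj : Set.InjOn z (Finset.univ : Finset (Fin N)) := hz.injOn
  set P : K[X] := X ^ N - ∏ j, (X - C (z j)) with hP
  have hmon : (∏ j : Fin N, (X - C (z j))).Monic :=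
    monic_prod_of_monic _ _ fun j _ => monic_X_sub_C _
  have hdegprod : (∏ j : Fin N, (X - C (z j))).natDegree = N := by
    rw [natDegree_prod_of_monic _ _ fun j _ => monic_X_sub_C _]
    simp
  have hdeg : P.degree < (Finset.univ : Finset (Fin N)).card := by
    rw [Finset.card_univ, Fintype.card_fin]
    have : P.degree < (N : ℕ) := by
      have hd : (X ^ N : K[X]).degree = (∏ j, (X - C (z j))).degree := by
        rw [degree_X_pow, Polynomial.degree_eq_natDegree hmon.ne_zero, hdegprod]
      have := Polynomial.degree_sub_lt hd (pow_ne_zero _ Polynomial.X_ne_zero)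
        (by simp [Polynomial.Monic.leadingCoeff, hmon, monic_X_pow])
      simpa [hP, degree_X_pow] using this
    exact_mod_cast this
  have heval : ∀ i ∈ (Finset.univ : Finset (Fin N)), P.eval (z i) = z i ^ N := by
    intro i _
    simp [hP, eval_prod, Finset.prod_eq_zero (Finset.mem_univ i)]
  have h := Lagrange.eq_interpolate_of_eval_eq (r := fun i => z i ^ N) hinj hdeg heval
  have hc := congrArg (fun p => p.coeff (N - 1)) h
  simp only [interp_coeff] at hc
  rw [← hc]
  have h1 : (X ^ N : K[X]).coeff (N - 1) = 0 := by
    rw [coeff_X_pow, if_neg]; omega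
  have h2 : (∏ j : Fin N, (X - C (z j))).coeff (N - 1) = -∑ j, z j := by
    have := prod_X_sub_C_coeff_card_pred (Finset.univ : Finset (Fin N)) z
      (by simp; omega)
    simpa using this
  simp [hP, coeff_sub, h1, h2]

end Aux

/-- Lagrange interpolation identity: for pairwise distinct `z₁, …, z_N` in a
field and `1 ≤ n ≤ N`, the sum
`∑ₖ (zₖ^{N−n} · ∑_{j≠k} zⱼ) / ∏_{j≠k}(zₖ − zⱼ)` equals `−1` if `n = 2` and `0`
for all other `n` with `1 ≤ n ≤ N`. -/
theorem lagrange_sum_power_weighted (K : Type*) [Field K] (N : ℕ) (hN : 1 ≤ N)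
    (z : Fin N → K) (hz : Function.Injective z)
    (n : ℕ) (hn1 : 1 ≤ n) (hn2 : n ≤ N) :
    ∑ k : Fin N,
        (z k ^ (N - n) * ∑ j ∈ Finset.univ.erase k, z j)
          / ∏ j ∈ Finset.univ.erase k, (z k - z j)
      = if n = 2 then -1 else 0 := by
  classical
  set S := ∑ j, z j with hS
  have hsplit : ∀ k : Fin N, ∑ j ∈ Finset.univ.erase k, z j = S - z k := by
    intro k
    rw [hS, ← Finset.add_sum_erase _ z (Finset.mem_univ k)]
    ring
  have hLHS : ∑ k : Fin N,
        (z k ^ (N - n) * ∑ j ∈ Finset.univ.erase k, z j)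
          / ∏ j ∈ Finset.univ.erase k, (z k - z j)
      = S * (∑ k, z k ^ (N - n) / ∏ j ∈ Finset.univ.erase k, (z k - z j))
        - ∑ k, z k ^ (N - n + 1) / ∏ j ∈ Finset.univ.erase k, (z k - z j) := by
    rw [Finset.mul_sum, ← Finset.sum_sub_distrib]
    refine Finset.sum_congr rfl fun k _ => ?_
    rw [hsplit k]
    field_simp
    ring
  rw [hLHS]
  rcases eq_or_ne n 1 with rfl | hne1
  · rw [A_le hN z hz (le_refl (N - 1)), if_pos rfl]
    have : N - 1 + 1 = N := by omega
    rw [this, A_N hN z hz, ← hS]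
    simp
  · rcases eq_or_ne n 2 with rfl | hne2
    · have hN2 : 2 ≤ N := hn2
      rw [A_le hN z hz (by omega : N - 2 ≤ N - 1), if_neg (by omega)]
      have : N - 2 + 1 = N - 1 := by omega
      rw [this, A_le hN z hz (le_refl (N - 1)), if_pos rfl]
      simp
    · have h3 : 3 ≤ n := by omega
      rw [A_le hN z hz (by omega : N - n ≤ N - 1), if_neg (by omega),
        A_le hN z hz (by omega : N - n + 1 ≤ N - 1), if_neg (by omega), if_neg hne2]
      simp
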